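/- Let R be a commutative ring, h = ∏_{i=1}^n y_i(1−y_i), and for each i define α_i(f) = f − y_i·(f|_{y_i=1}) − (1−y_i)·(f|_{y_i=0}). Then for any f ∈ R[y₁,…,yₙ], the polynomial f − α₁α₂⋯αₙ(f) is congruent to f modulo the ideal (h); equivalently, α₁⋯αₙ(f) ∈ (h). -/

import Mathlib

open MvPolynomial

/-- Substitution of the constant `a : R` for the variable `yᵢ`. -/
noncomputable def substVar {R : Type} [CommRing R] {n : ℕ} (i : Fin n) (a : R)
    (f : MvPolynomial (Fin n) R) : MvPolynomial (Fin n) R :=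
  aeval (fun l : Fin n => if l = i then (C a : MvPolynomial (Fin n) R) else X l) f

/-- The operator `αᵢ(f) = f - yᵢ·(f|_{yᵢ=1}) - (1-yᵢ)·(f|_{yᵢ=0})`. -/
noncomputable def alphaOp {R : Type} [CommRing R] {n : ℕ} (i : Fin n)
    (f : MvPolynomial (Fin n) R) : MvPolynomial (Fin n) R :=
  f - X i * substVar i 1 f - (1 - X i) * substVar i 0 f

variable {R : Type} [CommRing R] {n : ℕ}

lemma substVar_X (i l : Fin n) (a : R) :
    substVar i a (X l) = if l = i then C a else X l := by
  simp [substVar]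

lemma substVar_X_self (i : Fin n) (a : R) : substVar i a (X i) = C a := by
  rw [substVar_X, if_pos rfl]

lemma substVar_X_of_ne (i l : Fin n) (a : R) (h : l ≠ i) :
    substVar i a (X l) = X l := by
  rw [substVar_X, if_neg h]

lemma substVar_add (i : Fin n) (a : R) (p q : MvPolynomial (Fin n) R) :
    substVar i a (p + q) = substVar i a p + substVar i a q := map_add _ _ _

lemma substVar_sub (i : Fin n) (a : R) (p q : MvPolynomial (Fin n) R) :
    substVar i a (p - q) = substVar i a p - substVar i a q := map_sub _ _ _

lemma substVar_mul (i : Fin n) (a : R) (p q : MvPolynomial (Fin n) R) :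
    substVar i a (p * q) = substVar i a p * substVar i a q := map_mul _ _ _

lemma substVar_one (i : Fin n) (a : R) :
    substVar i a (1 : MvPolynomial (Fin n) R) = 1 := map_one _

lemma substVar_substVar (i : Fin n) (a b : R) (f : MvPolynomial (Fin n) R) :
    substVar i a (substVar i b f) = substVar i b f := by
  show ((aeval (fun l : Fin n => if l = i then (C a : MvPolynomial (Fin n) R) else X l)).comp
    (aeval (fun l : Fin n => if l = i then (C b : MvPolynomial (Fin n) R) else X l))) f =
    aeval (fun l : Fin n => if l = i then (C b : MvPolynomial (Fin n) R) else X l) f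
  congr 1
  apply algHom_ext
  intro l
  rcases eq_or_ne l i with rfl | h
  · simp [substVar]
  · simp [substVar, h]

lemma X_dvd_sub_substVar_zero (i : Fin n) (f : MvPolynomial (Fin n) R) :
    X i ∣ f - substVar i 0 f := by
  induction f using MvPolynomial.induction_on with
  | C a => simp [substVar]
  | add p q hp hq =>
      have := dvd_add hp hq
      convert this using 1
      rw [substVar_add]; ring
  | mul_X p k hp =>
      rw [substVar_mul, substVar_X]
      obtain ⟨c, hc⟩ := hp
      rcases eq_or_ne k i with rfl | h
      · rw [if_pos rfl, map_zero, mul_zero, sub_zero]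
        exact Dvd.intro_left p rfl
      · rw [if_neg h]
        exact ⟨c * X k, by rw [← sub_mul, hc]; ring⟩

lemma one_sub_X_dvd_sub_substVar_one (i : Fin n) (f : MvPolynomial (Fin n) R) :
    (1 - X i) ∣ f - substVar i 1 f := by
  induction f using MvPolynomial.induction_on with
  | C a => simp [substVar]
  | add p q hp hq =>
      have := dvd_add hp hq
      convert this using 1
      rw [substVar_add]; ring
  | mul_X p k hp =>
      rw [substVar_mul, substVar_X]
      obtain ⟨c, hc⟩ := hp
      rcases eq_or_ne k i with rfl | h
      · rw [if_pos rfl, map_one, mul_one]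
        refine ⟨-(substVar k 1 p) + c * X k, ?_⟩
        have hp' : p = substVar k 1 p + (1 - X k) * c := by
          rw [← hc]; ring
        nth_rewrite 1 [hp']
        ring
      · rw [if_neg h]
        exact ⟨c * X k, by rw [← sub_mul, hc]; ring⟩

lemma substVar_alphaOp_zero (i : Fin n) (f : MvPolynomial (Fin n) R) :
    substVar i 0 (alphaOp i f) = 0 := by
  rw [alphaOp, substVar_sub, substVar_sub, substVar_mul, substVar_mul,
    substVar_sub, substVar_one, substVar_X_self, substVar_substVar,
    substVar_substVar, C_0]
  ring

lemma substVar_alphaOp_one (i : Fin n) (f : MvPolynomial (Fin n) R) :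
    substVar i 1 (alphaOp i f) = 0 := by
  rw [alphaOp, substVar_sub, substVar_sub, substVar_mul, substVar_mul,
    substVar_sub, substVar_one, substVar_X_self, substVar_substVar,
    substVar_substVar, C_1]
  ring

lemma dvd_alphaOp (i : Fin n) (f : MvPolynomial (Fin n) R) :
    X i * (1 - X i) ∣ alphaOp i f := by
  have h0 : X i ∣ alphaOp i f := by
    have := X_dvd_sub_substVar_zero i (alphaOp i f)
    rwa [substVar_alphaOp_zero, sub_zero] at this
  have h1 : (1 - X i) ∣ alphaOp i f := by
    have := one_sub_X_dvd_sub_substVar_one i (alphaOp i f)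
    rwa [substVar_alphaOp_one, sub_zero] at this
  have hcop : IsCoprime (X i : MvPolynomial (Fin n) R) (1 - X i) :=
    ⟨1, 1, by ring⟩
  exact hcop.mul_dvd h0 h1

lemma substVar_prod_of_not_mem (i : Fin n) (a : R) (l : List (Fin n)) (hi : i ∉ l) :
    substVar i a ((l.map (fun j => X j * (1 - X j))).prod) =
      (l.map (fun j => (X j : MvPolynomial (Fin n) R) * (1 - X j))).prod := by
  induction l with
  | nil => simp [substVar]
  | cons j l ih =>
      simp only [List.map_cons, List.prod_cons]
      rw [substVar_mul, ih (fun h => hi (List.mem_cons_of_mem _ h))]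
      have hj : j ≠ i := fun h => hi (h ▸ List.mem_cons_self)
      rw [substVar_mul, substVar_sub, substVar_one, substVar_X_of_ne _ _ _ hj]

lemma alphaOp_mul_of_not_mem (i : Fin n) (l : List (Fin n)) (hi : i ∉ l)
    (q : MvPolynomial (Fin n) R) :
    alphaOp i ((l.map (fun j => X j * (1 - X j))).prod * q) =
      (l.map (fun j => (X j : MvPolynomial (Fin n) R) * (1 - X j))).prod * alphaOp i q := by
  simp only [alphaOp, substVar_mul, substVar_prod_of_not_mem i _ l hi]
  ring

lemma foldr_alpha_dvd (l : List (Fin n)) (hl : l.Nodup) (f : MvPolynomial (Fin n) R) :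
    (l.map (fun j => (X j : MvPolynomial (Fin n) R) * (1 - X j))).prod ∣
      l.foldr (fun i g => alphaOp i g) f := by
  induction l with
  | nil => simp
  | cons i l ih =>
      obtain ⟨hi, hl'⟩ := List.nodup_cons.mp hl
      obtain ⟨q, hq⟩ := ih hl'
      simp only [List.foldr_cons, List.map_cons, List.prod_cons]
      rw [hq, alphaOp_mul_of_not_mem i l hi]
      obtain ⟨r, hr⟩ := dvd_alphaOp i q
      exact ⟨r, by rw [hr]; ring⟩

/-- `α₁ α₂ ⋯ αₙ (f)` lies in the principal ideal generated by
`h = ∏ i, yᵢ(1-yᵢ)`; equivalently `f - α₁⋯αₙ(f) ≡ f mod (h)`. -/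
theorem alphaAll_mem_span
    (R : Type) [CommRing R] (n : ℕ) (f : MvPolynomial (Fin n) R) :
    (List.finRange n).foldr (fun i g => alphaOp i g) f ∈
      Ideal.span ({∏ i : Fin n, (X i * (1 - X i) : MvPolynomial (Fin n) R)} :
        Set (MvPolynomial (Fin n) R)) := by
  rw [Ideal.mem_span_singleton, Fin.prod_univ_def]
  exact foldr_alpha_dvd (List.finRange n) (List.nodup_finRange n) f
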